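/- Let n, d ≥ 1, χ ≥ 1, and let W ∈ ℝ^{n×n} satisfy W·1_n = 0, Wᵀ·1_n = 0, and ‖(W ⊗ I_d)v − v‖² ≤ (1 − 1/χ)‖v‖² for all v ∈ (ℝ^d)^n with Pv = v. Let r_yz > 0, α > 0, θ = 1/(2r_yz), let g, z̲ ∈ (ℝ^d)^n, and set z̄ = z̲ − θ·(W ⊗ I_d)g. Then 0 ≤ −α⁻¹·(⟨z̄ − z̲, g⟩ + r_yz‖z̄ − z̲‖²) − (4αχr_yz)⁻¹·‖g‖_P². -/

import Mathlib

open scoped BigOperators RealInnerProductSpace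
open Matrix

noncomputable section

/-- The Kronecker product `W ⊗ I_d` as an `nd × nd` matrix. -/
def kron (n d : ℕ) (W : Matrix (Fin n) (Fin n) ℝ) :
    Matrix (Fin n × Fin d) (Fin n × Fin d) ℝ :=
  Matrix.kroneckerMap (· * ·) W (1 : Matrix (Fin d) (Fin d) ℝ)

/-- `P = (I_n − (1/n)·1_n·1_nᵀ) ⊗ I_d`, the orthogonal projection onto `L⊥`. -/
def projMat (n d : ℕ) : Matrix (Fin n × Fin d) (Fin n × Fin d) ℝ :=
  Matrix.kroneckerMap (· * ·)
    ((1 : Matrix (Fin n) (Fin n) ℝ) - (n : ℝ)⁻¹ • Matrix.of (fun _ _ => (1 : ℝ)))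
    (1 : Matrix (Fin d) (Fin d) ℝ)

/-- Matrix-vector multiplication on the Euclidean space `(ℝ^d)^n ≃ ℝ^{nd}`. -/
def mulVecE {n d : ℕ} (M : Matrix (Fin n × Fin d) (Fin n × Fin d) ℝ)
    (v : EuclideanSpace ℝ (Fin n × Fin d)) : EuclideanSpace ℝ (Fin n × Fin d) :=
  (WithLp.equiv 2 (Fin n × Fin d → ℝ)).symm (M.mulVec ((WithLp.equiv 2 (Fin n × Fin d → ℝ)) v))

/-- `‖v‖_P = ‖Pv‖`. -/
def pnorm {n d : ℕ} (v : EuclideanSpace ℝ (Fin n × Fin d)) : ℝ :=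
  ‖mulVecE (projMat n d) v‖

lemma mulVecE_mul {n d : ℕ} (M N : Matrix (Fin n × Fin d) (Fin n × Fin d) ℝ)
    (v : EuclideanSpace ℝ (Fin n × Fin d)) :
    mulVecE (M * N) v = mulVecE M (mulVecE N v) := by
  simp [mulVecE, Matrix.mulVec_mulVec]

lemma inner_mulVecE {n d : ℕ} (M : Matrix (Fin n × Fin d) (Fin n × Fin d) ℝ)
    (x y : EuclideanSpace ℝ (Fin n × Fin d)) :
    ⟪mulVecE M x, y⟫ = ⟪x, mulVecE Mᵀ y⟫ := by
  simp only [mulVecE, PiLp.inner_apply, RCLike.inner_apply, conj_trivial,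
    WithLp.equiv_symm_apply, PiLp.toLp_apply, WithLp.equiv_apply]
  simp only [Matrix.mulVec, dotProduct, Matrix.transpose_apply,
    Finset.sum_mul, Finset.mul_sum]
  rw [Finset.sum_comm]
  apply Finset.sum_congr rfl
  intro i _
  apply Finset.sum_congr rfl
  intro j _
  show y j * (M j i * x i) = M j i * y j * x i
  ring

theorem stmt14 (n d : ℕ) (hn : 1 ≤ n) (hd : 1 ≤ d) (χ : ℝ) (hχ : 1 ≤ χ)
    (W : Matrix (Fin n) (Fin n) ℝ)
    (h1 : W.mulVec (fun _ => 1) = 0)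
    (h2 : Wᵀ.mulVec (fun _ => 1) = 0)
    (hW : ∀ v : EuclideanSpace ℝ (Fin n × Fin d), mulVecE (projMat n d) v = v →
      ‖mulVecE (kron n d W) v - v‖ ^ 2 ≤ (1 - 1 / χ) * ‖v‖ ^ 2)
    (ryz α : ℝ) (hryz : 0 < ryz) (hα : 0 < α)
    (θ : ℝ) (hθ : θ = 1 / (2 * ryz))
    (g zu zb : EuclideanSpace ℝ (Fin n × Fin d))
    (hzb : zb = zu - θ • mulVecE (kron n d W) g) :
    0 ≤ -α⁻¹ * (⟪zb - zu, g⟫ + ryz * ‖zb - zu‖ ^ 2) - (4 * α * χ * ryz)⁻¹ * pnorm g ^ 2 := by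
  have hn0 : (n : ℝ) ≠ 0 := by positivity
  have hχ0 : (0:ℝ) < χ := lt_of_lt_of_le one_pos hχ
  set A : Matrix (Fin n) (Fin n) ℝ :=
    (1 : Matrix (Fin n) (Fin n) ℝ) - (n : ℝ)⁻¹ • Matrix.of (fun _ _ => (1 : ℝ)) with hA
  -- W * J = 0
  have hWJ : W * Matrix.of (fun _ _ => (1 : ℝ)) = 0 := by
    ext i j
    have := congr_fun h1 i
    simpa [Matrix.mul_apply, Matrix.mulVec, dotProduct] using this
  have hJW : (Matrix.of (fun _ _ => (1 : ℝ)) : Matrix (Fin n) (Fin n) ℝ) * W = 0 := by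
    ext i j
    have := congr_fun h2 j
    simpa [Matrix.mul_apply, Matrix.mulVec, dotProduct, Matrix.transpose_apply] using this
  have hWA : W * A = W := by
    rw [hA, Matrix.mul_sub, Matrix.mul_one, Matrix.mul_smul, hWJ, smul_zero, sub_zero]
  have hAW : A * W = W := by
    rw [hA, Matrix.sub_mul, Matrix.one_mul, Matrix.smul_mul, hJW, smul_zero, sub_zero]
  have hAA : A * A = A := by
    ext i j
    simp only [hA, Matrix.mul_apply, Matrix.sub_apply, Matrix.smul_apply, Matrix.of_apply,
      Matrix.one_apply, smul_eq_mul, mul_one]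
    rw [Finset.sum_congr rfl (fun k _ => by ring_nf :
      ∀ k ∈ Finset.univ, ((if i = k then (1:ℝ) else 0) - (n:ℝ)⁻¹) *
        ((if k = j then (1:ℝ) else 0) - (n:ℝ)⁻¹)
      = (if i = k then (1:ℝ) else 0) * (if k = j then (1:ℝ) else 0)
        - (n:ℝ)⁻¹ * (if i = k then (1:ℝ) else 0)
        - (n:ℝ)⁻¹ * (if k = j then (1:ℝ) else 0) + (n:ℝ)⁻¹ ^ 2)]
    simp only [Finset.sum_add_distrib, Finset.sum_sub_distrib, ← Finset.mul_sum,
      Finset.sum_ite_eq, Finset.sum_ite_eq', Finset.mem_univ, if_true, mul_one,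
      Finset.sum_const, Finset.card_univ, Fintype.card_fin, nsmul_eq_mul, ite_mul, one_mul,
      zero_mul]
    field_simp
    ring
  have hAT : Aᵀ = A := by
    ext i j
    simp [hA, Matrix.one_apply, eq_comm]
  -- matrix identities lifted through Kronecker
  have hKP : kron n d W * projMat n d = kron n d W := by
    show (Matrix.kroneckerMap (· * ·) W 1) * (Matrix.kroneckerMap (· * ·) A 1)
      = Matrix.kroneckerMap (· * ·) W 1
    rw [← Matrix.mul_kronecker_mul, hWA, Matrix.mul_one]
  have hPK : projMat n d * kron n d W = kron n d W := by
    show (Matrix.kroneckerMap (· * ·) A 1) * (Matrix.kroneckerMap (· * ·) W 1)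
      = Matrix.kroneckerMap (· * ·) W 1
    rw [← Matrix.mul_kronecker_mul, hAW, Matrix.mul_one]
  have hPP : projMat n d * projMat n d = projMat n d := by
    show (Matrix.kroneckerMap (· * ·) A 1) * (Matrix.kroneckerMap (· * ·) A 1)
      = Matrix.kroneckerMap (· * ·) A 1
    rw [← Matrix.mul_kronecker_mul, hAA, Matrix.mul_one]
  have hPT : (projMat n d)ᵀ = projMat n d := by
    show (Matrix.kroneckerMap (· * ·) A 1)ᵀ = Matrix.kroneckerMap (· * ·) A 1
    rw [← Matrix.kroneckerMap_transpose, hAT, Matrix.transpose_one]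
  have hPv : ∀ v, mulVecE (projMat n d) (mulVecE (projMat n d) v)
      = mulVecE (projMat n d) v := fun v => by rw [← mulVecE_mul, hPP]
  have hKPv : ∀ v, mulVecE (kron n d W) (mulVecE (projMat n d) v)
      = mulVecE (kron n d W) v := fun v => by rw [← mulVecE_mul, hKP]
  have hPKv : ∀ v, mulVecE (projMat n d) (mulVecE (kron n d W) v)
      = mulVecE (kron n d W) v := fun v => by rw [← mulVecE_mul, hPK]
  obtain ⟨u, hu⟩ : ∃ u, mulVecE (projMat n d) g = u := ⟨_, rfl⟩
  have hPu : mulVecE (projMat n d) u = u := by rw [← hu, hPv]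
  have hKg : mulVecE (kron n d W) g = mulVecE (kron n d W) u := by rw [← hu, hKPv]
  obtain ⟨Ku, hKu⟩ : ∃ Ku, mulVecE (kron n d W) u = Ku := ⟨_, rfl⟩
  have hinner : ⟪Ku, g⟫ = ⟪Ku, u⟫ := by
    have hh : mulVecE (projMat n d) Ku = Ku := by rw [← hKu, hPKv]
    calc ⟪Ku, g⟫ = ⟪mulVecE (projMat n d) Ku, g⟫ := by rw [hh]
    _ = ⟪Ku, mulVecE (projMat n d)ᵀ g⟫ := inner_mulVecE _ _ _
    _ = ⟪Ku, u⟫ := by rw [hPT, hu]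
  -- the spectral bound
  have hb := hW u hPu
  rw [hKu] at hb
  have hexp : ‖Ku - u‖ ^ 2 = ‖Ku‖ ^ 2 - 2 * ⟪Ku, u⟫ + ‖u‖ ^ 2 := by
    rw [norm_sub_sq_real]
  have hu2 : (0:ℝ) ≤ ‖u‖ ^ 2 := by positivity
  have hkey : χ⁻¹ * ‖u‖ ^ 2 ≤ 2 * ⟪Ku, u⟫ - ‖Ku‖ ^ 2 := by
    rw [hexp] at hb
    have h1χ : (1 - 1 / χ) * ‖u‖ ^ 2 = ‖u‖ ^ 2 - χ⁻¹ * ‖u‖ ^ 2 := by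
      field_simp
    nlinarith [hb]
  -- rewrite the goal
  have hdiff : zb - zu = -(θ • Ku) := by rw [hzb, hKg, hKu]; abel
  have hip : ⟪zb - zu, g⟫ = -(θ * ⟪Ku, u⟫) := by
    rw [hdiff, inner_neg_left, real_inner_smul_left, hinner]
  have hnrm : ‖zb - zu‖ ^ 2 = θ ^ 2 * ‖Ku‖ ^ 2 := by
    rw [hdiff, norm_neg, norm_smul]
    simp [mul_pow, sq_abs]
  have hpn : pnorm g = ‖u‖ := by rw [pnorm, hu]
  rw [hip, hnrm, hpn, hθ]
  have hfinal : -α⁻¹ * (-(1 / (2 * ryz) * ⟪Ku, u⟫) + ryz * ((1 / (2 * ryz)) ^ 2 * ‖Ku‖ ^ 2))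
      - (4 * α * χ * ryz)⁻¹ * ‖u‖ ^ 2
      = (4 * α * ryz)⁻¹ * (2 * ⟪Ku, u⟫ - ‖Ku‖ ^ 2 - χ⁻¹ * ‖u‖ ^ 2) := by
    field_simp
    ring
  rw [hfinal]
  have : (0:ℝ) ≤ (4 * α * ryz)⁻¹ := by positivity
  apply mul_nonneg this
  linarith [hkey]

end
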